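/- Define coefficients C_p^{(L)} by C_p^{(0)} = C_p (where C_0 = 1 and Σ_{q=0}^p C_{p−q}/(2q+1)! = 0 for p ≥ 1) and C_p^{(L)} = Σ_{q=0}^p C_q^{(L−1)}·C_{p−q} for L ≥ 1. Then for all L ≥ 0 and p ≥ 0, Σ_{q=0}^p C_{p−q}^{(L+1)}/(2q)! = ((L+1−2p)/(L+1))·C_p^{(L)}. -/

import Mathlib

set_option linter.unnecessarySeqFocus false
set_option linter.unusedSectionVars false

open Finset
open PowerSeries


lemma sum_range_even_odd (f : ℕ → ℚ) (n : ℕ) :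
    ∑ k ∈ range (2*n+1), f k =
      (∑ q ∈ range (n+1), f (2*q)) + ∑ q ∈ range n, f (2*q+1) := by
  induction n with
  | zero => simp
  | succ n ih =>
    have h1 : 2*(n+1)+1 = (2*n+1) + 1 + 1 := by ring
    rw [h1, Finset.sum_range_succ, Finset.sum_range_succ, ih,
      Finset.sum_range_succ (fun q => f (2*q)) (n+1),
      Finset.sum_range_succ (fun q => f (2*q+1)) n]
    have e1 : 2*(n+1) = 2*n+1+1 := by ring
    rw [e1]; ring

lemma sum_range_even_odd' (f : ℕ → ℚ) (n : ℕ) :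
    ∑ k ∈ range (2*n+2), f k =
      (∑ q ∈ range (n+1), f (2*q)) + ∑ q ∈ range (n+1), f (2*q+1) := by
  have h1 : 2*n+2 = (2*n+1)+1 := by ring
  rw [h1, Finset.sum_range_succ, sum_range_even_odd,
    Finset.sum_range_succ (fun q => f (2*q+1)) n]
  ring

def IsEv (A : ℚ⟦X⟧) (a : ℕ → ℚ) : Prop :=
  ∀ n, PowerSeries.coeff (R := ℚ) (2*n) A = a n ∧ PowerSeries.coeff (R := ℚ) (2*n+1) A = 0

def IsOdd (A : ℚ⟦X⟧) (a : ℕ → ℚ) : Prop :=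
  ∀ n, PowerSeries.coeff (R := ℚ) (2*n+1) A = a n ∧ PowerSeries.coeff (R := ℚ) (2*n) A = 0

lemma coeff_mul_range (A B : ℚ⟦X⟧) (n : ℕ) :
    PowerSeries.coeff (R := ℚ) n (A*B) =
      ∑ k ∈ range (n+1), PowerSeries.coeff (R := ℚ) k A * PowerSeries.coeff (R := ℚ) (n-k) B := by
  rw [PowerSeries.coeff_mul, Finset.Nat.sum_antidiagonal_eq_sum_range_succ_mk]

lemma IsEv.mul {A B : ℚ⟦X⟧} {a b : ℕ → ℚ} (hA : IsEv A a) (hB : IsEv B b) :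
    IsEv (A*B) (fun p => ∑ q ∈ range (p+1), a q * b (p-q)) := by
  intro p
  constructor
  · rw [coeff_mul_range, sum_range_even_odd]
    have h1 : ∀ q ∈ range (p+1),
        PowerSeries.coeff (R := ℚ) (2*q) A * PowerSeries.coeff (R := ℚ) (2*p - 2*q) B = a q * b (p-q) := by
      intro q hq
      rw [Finset.mem_range] at hq
      have : 2*p - 2*q = 2*(p-q) := by omega
      rw [this, (hA q).1, (hB (p-q)).1]
    rw [Finset.sum_congr rfl h1]
    have h2 : ∀ q ∈ range p, PowerSeries.coeff (R := ℚ) (2*q+1) A * PowerSeries.coeff (R := ℚ) (2*p - (2*q+1)) B = 0 := by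
      intro q hq; rw [(hA q).2, zero_mul]
    rw [Finset.sum_congr rfl h2]
    simp
  · have h1 : 2*p+1+1 = 2*p+2 := rfl
    rw [coeff_mul_range, h1, sum_range_even_odd']
    have h2 : ∀ q ∈ range (p+1),
        PowerSeries.coeff (R := ℚ) (2*q) A * PowerSeries.coeff (R := ℚ) (2*p+1 - 2*q) B = 0 := by
      intro q hq
      rw [Finset.mem_range] at hq
      have : 2*p+1 - 2*q = 2*(p-q)+1 := by omega
      rw [this, (hB (p-q)).2, mul_zero]
    have h3 : ∀ q ∈ range (p+1),
        PowerSeries.coeff (R := ℚ) (2*q+1) A * PowerSeries.coeff (R := ℚ) (2*p+1 - (2*q+1)) B = 0 := by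
      intro q hq; rw [(hA q).2, zero_mul]
    rw [Finset.sum_congr rfl h2, Finset.sum_congr rfl h3]
    simp

lemma IsEv.mul_odd {A B : ℚ⟦X⟧} {a b : ℕ → ℚ} (hA : IsEv A a) (hB : IsOdd B b) :
    IsOdd (A*B) (fun p => ∑ q ∈ range (p+1), a q * b (p-q)) := by
  intro p
  constructor
  · have h1 : 2*p+1+1 = 2*p+2 := rfl
    rw [coeff_mul_range, h1, sum_range_even_odd']
    have h2 : ∀ q ∈ range (p+1),
        PowerSeries.coeff (R := ℚ) (2*q) A * PowerSeries.coeff (R := ℚ) (2*p+1 - 2*q) B = a q * b (p-q) := by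
      intro q hq
      rw [Finset.mem_range] at hq
      have : 2*p+1 - 2*q = 2*(p-q)+1 := by omega
      rw [this, (hA q).1, (hB (p-q)).1]
    have h3 : ∀ q ∈ range (p+1),
        PowerSeries.coeff (R := ℚ) (2*q+1) A * PowerSeries.coeff (R := ℚ) (2*p+1 - (2*q+1)) B = 0 := by
      intro q hq; rw [(hA q).2, zero_mul]
    rw [Finset.sum_congr rfl h2, Finset.sum_congr rfl h3]
    simp
  · rw [coeff_mul_range, sum_range_even_odd]
    have h1 : ∀ q ∈ range (p+1),
        PowerSeries.coeff (R := ℚ) (2*q) A * PowerSeries.coeff (R := ℚ) (2*p - 2*q) B = 0 := by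
      intro q hq
      rw [Finset.mem_range] at hq
      have : 2*p - 2*q = 2*(p-q) := by omega
      rw [this, (hB (p-q)).2, mul_zero]
    have h2 : ∀ q ∈ range p, PowerSeries.coeff (R := ℚ) (2*q+1) A * PowerSeries.coeff (R := ℚ) (2*p - (2*q+1)) B = 0 := by
      intro q hq; rw [(hA q).2, zero_mul]
    rw [Finset.sum_congr rfl h1, Finset.sum_congr rfl h2]
    simp

section Test
variable (C : ℕ → ℚ) (hC0 : C 0 = 1)
  (hCrec : ∀ p : ℕ, 1 ≤ p → ∑ q ∈ Finset.range (p + 1), C (p - q) / (Nat.factorial (2 * q + 1) : ℚ) = 0)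

noncomputable def F : ℚ⟦X⟧ := PowerSeries.mk fun n => if n % 2 = 0 then C (n/2) else 0
noncomputable def Sh : ℚ⟦X⟧ := PowerSeries.mk fun n => if n % 2 = 1 then 1/(n.factorial : ℚ) else 0
noncomputable def Ch : ℚ⟦X⟧ := PowerSeries.mk fun n => if n % 2 = 0 then 1/(n.factorial : ℚ) else 0

lemma isEv_F : IsEv (F C) C := by
  intro n
  constructor <;> simp [F, Nat.mul_div_cancel_left, Nat.mul_mod_right] <;> omega

lemma isOdd_Sh : IsOdd Sh (fun q => 1/((2*q+1).factorial : ℚ)) := by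
  intro n
  constructor <;> simp [Sh] <;> omega

lemma isEv_Ch : IsEv Ch (fun q => 1/((2*q).factorial : ℚ)) := by
  intro n
  constructor <;> simp [Ch] <;> omega

lemma deriv_Sh : d⁄dX ℚ Sh = Ch := by
  ext n
  rw [PowerSeries.coeff_derivative]
  simp only [Sh, Ch, PowerSeries.coeff_mk]
  rcases Nat.even_or_odd n with ⟨k,rfl⟩ | ⟨k,rfl⟩
  · have h1 : (k+k+1) % 2 = 1 := by omega
    have h2 : (k+k) % 2 = 0 := by omega
    rw [if_pos h1, if_pos h2, Nat.factorial_succ]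
    push_cast
    have : ((k+k).factorial : ℚ) ≠ 0 := by positivity
    field_simp
  · have h1 : ¬ ((2*k+1+1) % 2 = 1) := by omega
    have h2 : ¬ ((2*k+1) % 2 = 0) := by omega
    rw [if_neg h1, if_neg h2, zero_mul]

include hC0 hCrec

lemma F_mul_Sh : F C * Sh = X := by
  have hodd := (isEv_F C).mul_odd isOdd_Sh
  ext n
  rcases Nat.even_or_odd n with ⟨p,rfl⟩ | ⟨p,rfl⟩
  · have h0 : p + p = 2*p := by ring
    rw [h0, (hodd p).2, PowerSeries.coeff_X, if_neg (by omega)]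
  · rw [(hodd p).1, PowerSeries.coeff_X]
    dsimp only
    rcases Nat.eq_zero_or_pos p with rfl | hp
    · simp [hC0]
    · rw [if_neg (by omega)]
      have hr := Finset.sum_range_reflect
        (fun j => C (p - j) / (((2*j+1).factorial : ℚ))) (p+1)
      have he : ∀ j ∈ range (p+1),
          C (p - (p + 1 - 1 - j)) / (((2*(p+1-1-j)+1).factorial : ℚ))
            = C j * (1/(((2*(p-j)+1).factorial : ℚ))) := by
        intro j hj
        rw [Finset.mem_range] at hj
        have e1 : p + 1 - 1 - j = p - j := by omega
        have e2 : p - (p - j) = j := by omega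
        rw [e1, e2, div_eq_mul_inv, one_div]
      rw [Finset.sum_congr rfl he] at hr
      rw [hr, hCrec p hp]

lemma base_eq : (F C)^2 * Ch = F C - X * (d⁄dX ℚ (F C)) := by
  have h1 := congrArg (d⁄dX ℚ) (F_mul_Sh C hC0 hCrec)
  rw [Derivation.leibniz, PowerSeries.derivative_X, deriv_Sh, smul_eq_mul, smul_eq_mul] at h1
  linear_combination (F C) * h1 - (d⁄dX ℚ (F C)) * (F_mul_Sh C hC0 hCrec)

lemma main_eq : ∀ M : ℕ, ((M : ℚ⟦X⟧)+1) * ((F C)^(M+2) * Ch) =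
    ((M : ℚ⟦X⟧)+1) * (F C)^(M+1) - X * d⁄dX ℚ ((F C)^(M+1)) := by
  intro M
  induction M with
  | zero =>
    simp only [Nat.cast_zero, zero_add, pow_one, one_mul]
    exact base_eq C hC0 hCrec
  | succ M ih =>
    have hD2 : d⁄dX ℚ ((F C)^(M+1+1)) =
        (F C)^(M+1) * d⁄dX ℚ (F C) + (F C) * d⁄dX ℚ ((F C)^(M+1)) := by
      rw [pow_succ, Derivation.leibniz, smul_eq_mul, smul_eq_mul]
    have hb := base_eq C hC0 hCrec
    push_cast
    linear_combination F C * ih + (F C)^(M+1) * hb + X * hD2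

omit hC0 hCrec

lemma IsEv.congr {A : ℚ⟦X⟧} {a b : ℕ → ℚ} (h : IsEv A a) (hab : ∀ n, a n = b n) :
    IsEv A b := fun n => ⟨(h n).1.trans (hab n), (h n).2⟩

variable (CL : ℕ → ℕ → ℚ) (hCL0 : ∀ p, CL 0 p = C p)
  (hCLrec : ∀ L p, CL (L + 1) p = ∑ q ∈ Finset.range (p + 1), CL L q * C (p - q))

include hCL0 hCLrec

lemma isEv_Fpow : ∀ M, IsEv ((F C)^(M+1)) (CL M) := by
  intro M
  induction M with
  | zero =>
    rw [pow_one]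
    exact (isEv_F C).congr (fun n => (hCL0 n).symm)
  | succ M ih =>
    have h := ih.mul (isEv_F C)
    rw [← pow_succ] at h
    exact h.congr (fun n => (hCLrec M n).symm)

include hC0 hCrec

theorem CL_recursion_test (L p : ℕ) :
    ∑ q ∈ Finset.range (p + 1), CL (L + 1) (p - q) / (Nat.factorial (2 * q) : ℚ) =
      (((L : ℚ) + 1 - 2 * p) / ((L : ℚ) + 1)) * CL L p := by
  have hEF := isEv_Fpow C CL hCL0 hCLrec L
  have hEF2 : IsEv ((F C)^(L+2)) (CL (L+1)) := isEv_Fpow C CL hCL0 hCLrec (L+1)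
  have hprod := hEF2.mul isEv_Ch
  have hc : ((L : ℚ⟦X⟧)+1) = PowerSeries.C (R := ℚ) ((L:ℚ)+1) := by
    rw [map_add, map_natCast, map_one]
  have hm := main_eq C hC0 hCrec L
  rw [hc] at hm
  have h := congrArg (PowerSeries.coeff (R := ℚ) (2*p)) hm
  rw [map_sub, PowerSeries.coeff_C_mul, PowerSeries.coeff_C_mul, (hprod p).1,
    (hEF p).1] at h
  have hX : PowerSeries.coeff (R := ℚ) (2*p) (X * d⁄dX ℚ ((F C)^(L+1))) = 2*p*CL L p := by
    rcases p with _ | q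
    · simp
    · have e1 : 2*(q+1) = 2*q+1+1 := by ring
      rw [e1, PowerSeries.coeff_succ_X_mul, PowerSeries.coeff_derivative]
      have e2 : 2*q+1+1 = 2*(q+1) := by ring
      rw [e2, (hEF (q+1)).1]
      push_cast
      ring
  rw [hX] at h
  dsimp only at h
  have hr := Finset.sum_range_reflect
    (fun j => CL (L+1) (p - j) / (((2*j).factorial : ℚ))) (p+1)
  have he : ∀ j ∈ range (p+1),
      CL (L+1) (p - (p + 1 - 1 - j)) / (((2*(p+1-1-j)).factorial : ℚ))
        = CL (L+1) j * (1/(((2*(p-j)).factorial : ℚ))) := by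
    intro j hj
    rw [Finset.mem_range] at hj
    have e1 : p + 1 - 1 - j = p - j := by omega
    have e2 : p - (p - j) = j := by omega
    rw [e1, e2, div_eq_mul_inv, one_div]
  rw [Finset.sum_congr rfl he] at hr
  rw [hr] at h
  have hL1 : ((L : ℚ)+1) ≠ 0 := by positivity
  field_simp
  linear_combination h

end Test

theorem CL_recursion_y (C : ℕ → ℚ) (hC0 : C 0 = 1)
    (hCrec : ∀ p : ℕ, 1 ≤ p → ∑ q ∈ Finset.range (p + 1), C (p - q) / (Nat.factorial (2 * q + 1) : ℚ) = 0)
    (CL : ℕ → ℕ → ℚ) (hCL0 : ∀ p, CL 0 p = C p)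
    (hCLrec : ∀ L p, CL (L + 1) p = ∑ q ∈ Finset.range (p + 1), CL L q * C (p - q))
    (L p : ℕ) :
    ∑ q ∈ Finset.range (p + 1), CL (L + 1) (p - q) / (Nat.factorial (2 * q) : ℚ) =
      (((L : ℚ) + 1 - 2 * p) / ((L : ℚ) + 1)) * CL L p := by
  exact CL_recursion_test C hC0 hCrec CL hCL0 hCLrec L p
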